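/- arXiv:1502.00067 — 2 statements merged into one kernel-verified Lean document; each statement's English description precedes it below -/
import Mathlib

section
/- Let r₁ and r be natural numbers with r ≥ r₁ + 2, and let a, b be real numbers with 1 - 2^{-r} ≤ a ≤ 1 and 0 ≤ b ≤ 2^{-r}. Then a²/(a² + b²) ≥ 1 - 2^{-r₁}. -/
theorem stmt_7 (r₁ r : ℕ) (hr : r₁ + 2 ≤ r) (a b : ℝ)
    (hal : 1 - (1/2 : ℝ)^r ≤ a) (hau : a ≤ 1)
    (hbl : 0 ≤ b) (hbu : b ≤ (1/2 : ℝ)^r) :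
    a^2 / (a^2 + b^2) ≥ 1 - (1/2 : ℝ)^r₁ := by
  have h1 : (1/2 : ℝ)^r ≤ (1/2)^(r₁+2) :=
    pow_le_pow_of_le_one (by norm_num) (by norm_num) hr
  have h2 : (1/2 : ℝ)^r ≤ (1/2)^(2:ℕ) :=
    pow_le_pow_of_le_one (by norm_num) (by norm_num) (by omega)
  have h3 : (1/2 : ℝ)^(r₁+2) = (1/2)^r₁ / 4 := by ring
  have hδ0 : (0:ℝ) < (1/2)^r₁ := by positivity
  have hε0 : (0:ℝ) < (1/2)^r := by positivity
  have ha0 : (3/4 : ℝ) ≤ a := by nlinarith [h2]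
  have hpos : 0 < a^2 + b^2 := by nlinarith
  rw [ge_iff_le, ← sub_nonneg]
  have k1 : b*b ≤ (1/2:ℝ)^r * (1/2:ℝ)^r := mul_le_mul hbu hbu hbl hε0.le
  have k2 : (1/2:ℝ)^r * (1/2:ℝ)^r ≤ (1/2:ℝ)^(r₁+2) * (1/2:ℝ)^(2:ℕ) :=
    mul_le_mul h1 h2 hε0.le (by positivity)
  have k3 : (0:ℝ) ≤ a^2 - 9/16 := by nlinarith
  have k4 : (0:ℝ) ≤ (1/2:ℝ)^r₁ * (a^2 - 9/16) := mul_nonneg hδ0.le k3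
  have key : b^2 ≤ (1/2)^r₁ * a^2 := by nlinarith [sq b]
  have : a^2 / (a^2 + b^2) - (1 - (1/2)^r₁)
      = ((1/2)^r₁ * a^2 - b^2 + (1/2)^r₁ * b^2) / (a^2 + b^2) := by
    field_simp; ring
  rw [this]
  apply div_nonneg _ hpos.le
  nlinarith [sq_nonneg b]
end

section
/- Let a and b be positive real numbers and let x be a real number with 0 ≤ x ≤ 1/2. If a ≥ (1-x)²·b, then 3a/(3a + b) ≥ 1/2 + 1/22 - (12/11)·x. -/
theorem stmt_15 (a b x : ℝ) (ha : 0 < a) (hb : 0 < b)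
    (hx0 : 0 ≤ x) (hx1 : x ≤ 1/2) (h : a ≥ (1 - x)^2 * b) :
    3 * a / (3 * a + b) ≥ 1/2 + 1/22 - (12/11) * x := by
  have hd : (0:ℝ) < 3 * a + b := by linarith
  rw [ge_iff_le, le_div_iff₀ hd]
  nlinarith [sq_nonneg x, mul_nonneg hx0 hb.le, mul_nonneg (mul_nonneg hx0 hx0) hb.le, mul_nonneg hx0 ha.le, sq_nonneg (1-x)]
end
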